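/- Suppose f¹(t,ω,ℓ) ≤ f²(t,ω,ℓ) for all (t,ω,ℓ), and let ℓ¹, ℓ² be 𝓕_τ-measurable real-valued random variables such that ω ↦ ∫_τ^σ fⁱ(s, ℓⁱ(ω))(ω) ds is integrable for i = 1,2 and E[∫_τ^σ f¹(s, ℓ¹) ds | 𝓕_τ] ≥ E[∫_τ^σ f²(s, ℓ²) ds | 𝓕_τ] ℙ-almost surely. Then ℓ¹ ≥ ℓ² ℙ-almost surely. -/

import Mathlib

open MeasureTheory Filter Set

noncomputable section

variable {Ω : Type*} {m0 : MeasurableSpace Ω}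

/-- The standing assumptions on a generator `f`: for each `(t,ω)`, `ℓ ↦ f(t,ω,ℓ)` is
continuous and strictly increasing, and for each `ℓ` the process `(t,ω) ↦ f(t,ω,ℓ)`
is progressively measurable with `E[∫₀ᵀ |f(t,ℓ)| dt] < ∞`. -/
def IsNiceGenerator (P : Measure Ω) [SFinite P] (F : Filtration ℝ m0) (T : ℝ)
    (f : ℝ → Ω → ℝ → ℝ) : Prop :=
  (∀ t ω, StrictMono (f t ω)) ∧ (∀ t ω, Continuous (f t ω)) ∧
  (∀ ℓ : ℝ, ProgMeasurable F (fun t ω => f t ω ℓ)) ∧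
  (∀ ℓ : ℝ, Integrable (fun p : ℝ × Ω => f p.1 p.2 ℓ)
      ((volume.restrict (Set.Icc 0 T)).prod P))

lemma section_aesm (F : Filtration ℝ m0) (T : ℝ)
    (f : ℝ → Ω → ℝ → ℝ) (hprog : ∀ ℓ : ℝ, ProgMeasurable F (fun t ω => f t ω ℓ))
    (ω : Ω) (ℓ : ℝ) :
    AEStronglyMeasurable (fun s => f s ω ℓ) (volume.restrict (Set.Icc 0 T)) := by
  have h := hprog ℓ T
  have hmap : Measurable[_, Subtype.instMeasurableSpace.prod (F T)]
      (fun s : ℝ => ((⟨min s T, mem_Iic.mpr (min_le_right _ _)⟩ : Set.Iic T), ω)) :=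
    Measurable.prod (Measurable.subtype_mk (measurable_id.min measurable_const))
      measurable_const
  have hcomp : StronglyMeasurable fun s : ℝ => f (min s T) ω ℓ :=
    h.comp_measurable hmap
  refine hcomp.aestronglyMeasurable.congr ?_
  filter_upwards [ae_restrict_mem measurableSet_Icc] with s hs
  rw [min_eq_left hs.2]

/-- a.e. integrability of the section at a random level, by monotone domination. -/
lemma section_integrableOn (P : Measure Ω) [IsProbabilityMeasure P]
    (F : Filtration ℝ m0) (T : ℝ)
    (f : ℝ → Ω → ℝ → ℝ) (hmono : ∀ t ω, StrictMono (f t ω))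
    (hprog : ∀ ℓ : ℝ, ProgMeasurable F (fun t ω => f t ω ℓ))
    (hint : ∀ ℓ : ℝ, Integrable (fun p : ℝ × Ω => f p.1 p.2 ℓ)
      ((volume.restrict (Set.Icc 0 T)).prod P))
    (ℓ : Ω → ℝ) :
    ∀ᵐ ω ∂P, IntegrableOn (fun s => f s ω (ℓ ω)) (Set.Icc 0 T) := by
  have hae : ∀ᵐ ω ∂P, ∀ n : ℕ,
      IntegrableOn (fun s => f s ω (n : ℝ)) (Set.Icc 0 T) ∧
      IntegrableOn (fun s => f s ω (-(n : ℝ))) (Set.Icc 0 T) := by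
    rw [ae_all_iff]
    intro n
    filter_upwards [(hint (n : ℝ)).prod_left_ae, (hint (-(n : ℝ))).prod_left_ae] with ω h1 h2
    exact ⟨h1, h2⟩
  filter_upwards [hae] with ω hω
  set n : ℕ := ⌈|ℓ ω|⌉₊ with hn
  have hln : ℓ ω ≤ (n : ℝ) := (le_abs_self _).trans (Nat.le_ceil _)
  have hln' : -(n : ℝ) ≤ ℓ ω := by
    have := (neg_abs_le (ℓ ω))
    have h2 : |ℓ ω| ≤ (n : ℝ) := Nat.le_ceil _
    linarith
  have hbound : IntegrableOn
      (fun s => |f s ω (-(n : ℝ))| + |f s ω (n : ℝ)|) (Set.Icc 0 T) :=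
    (hω n).2.abs.add (hω n).1.abs
  refine Integrable.mono hbound (section_aesm F T f hprog ω (ℓ ω)) ?_
  filter_upwards with s
  have h1 : f s ω (-(n : ℝ)) ≤ f s ω (ℓ ω) := (hmono s ω).monotone hln'
  have h2 : f s ω (ℓ ω) ≤ f s ω (n : ℝ) := (hmono s ω).monotone hln
  rw [Real.norm_eq_abs, Real.norm_eq_abs, abs_le]
  constructor
  · have := neg_abs_le (f s ω (-(n:ℝ)))
    have h3 := abs_nonneg (f s ω (n:ℝ))
    have h4 := abs_nonneg (|f s ω (-(n:ℝ))| + |f s ω (n:ℝ)|)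
    have h5 := le_abs_self (|f s ω (-(n:ℝ))| + |f s ω (n:ℝ)|)
    nlinarith [neg_abs_le (|f s ω (-(n:ℝ))| + |f s ω (n:ℝ)|)]
  · have := le_abs_self (f s ω (n:ℝ))
    have h3 := abs_nonneg (f s ω (-(n:ℝ)))
    have h5 := le_abs_self (|f s ω (-(n:ℝ))| + |f s ω (n:ℝ)|)
    linarith

/-- **Comparison of the implicit levels (from the proof of Theorem 2.7).**
Let `τ ≤ σ` be `[0,T]`-valued stopping times with `τ < σ` a.s., and let `f¹ ≤ f²`
pointwise. If `ℓ¹, ℓ²` are `𝓕_τ`-measurable random variables with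
`E[∫_τ^σ f¹(s,ℓ¹) ds | 𝓕_τ] ≥ E[∫_τ^σ f²(s,ℓ²) ds | 𝓕_τ]` a.s., then `ℓ¹ ≥ ℓ²` a.s. -/
theorem comparison_of_levels
    (P : Measure Ω) [IsProbabilityMeasure P]
    (F : Filtration ℝ m0) (T : ℝ) (hT : 0 < T)
    (husual_complete : ∀ s : Set Ω, MeasurableSet s → P s = 0 → MeasurableSet[F 0] s)
    (husual_right : ∀ t : ℝ, F t = ⨅ s ∈ Set.Ioi t, F s)
    (τ σ : Ω → ℝ) (hτ : IsStoppingTime F (fun ω => (τ ω : WithTop ℝ)))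
    (hσ : IsStoppingTime F (fun ω => (σ ω : WithTop ℝ)))
    (hτT : ∀ ω, τ ω ∈ Set.Icc 0 T) (hσT : ∀ ω, σ ω ∈ Set.Icc 0 T)
    (hle : ∀ ω, τ ω ≤ σ ω) (hlt : ∀ᵐ ω ∂P, τ ω < σ ω)
    (f₁ f₂ : ℝ → Ω → ℝ → ℝ)
    (hf₁ : IsNiceGenerator P F T f₁) (hf₂ : IsNiceGenerator P F T f₂)
    (hf₁₂ : ∀ t ω ℓ, f₁ t ω ℓ ≤ f₂ t ω ℓ)
    (ℓ₁ ℓ₂ : Ω → ℝ)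
    (hℓ₁ : Measurable[hτ.measurableSpace] ℓ₁) (hℓ₂ : Measurable[hτ.measurableSpace] ℓ₂)
    (hint₁ : Integrable (fun ω => ∫ s in (τ ω)..(σ ω), f₁ s ω (ℓ₁ ω)) P)
    (hint₂ : Integrable (fun ω => ∫ s in (τ ω)..(σ ω), f₂ s ω (ℓ₂ ω)) P)
    (hcond : ∀ᵐ ω ∂P,
      (P[(fun ω' => ∫ s in (τ ω')..(σ ω'), f₂ s ω' (ℓ₂ ω')) | hτ.measurableSpace]) ω
        ≤ (P[(fun ω' => ∫ s in (τ ω')..(σ ω'), f₁ s ω' (ℓ₁ ω')) | hτ.measurableSpace]) ω) :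
    ∀ᵐ ω ∂P, ℓ₂ ω ≤ ℓ₁ ω := by
  obtain ⟨hmono₁, hcont₁, hprog₁, hI₁⟩ := hf₁
  obtain ⟨hmono₂, hcont₂, hprog₂, hI₂⟩ := hf₂
  have hm : hτ.measurableSpace ≤ m0 := hτ.measurableSpace_le
  set A : Set Ω := {ω | ℓ₁ ω < ℓ₂ ω} with hAdef
  have hA : MeasurableSet[hτ.measurableSpace] A := measurableSet_lt hℓ₁ hℓ₂
  have hA0 : MeasurableSet A := hm _ hA
  set X₁ : Ω → ℝ := fun ω => ∫ s in (τ ω)..(σ ω), f₁ s ω (ℓ₁ ω) with hX₁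
  set X₂ : Ω → ℝ := fun ω => ∫ s in (τ ω)..(σ ω), f₂ s ω (ℓ₂ ω) with hX₂
  -- the integral inequality on A
  have hineq : ∫ ω in A, X₂ ω ∂P ≤ ∫ ω in A, X₁ ω ∂P := by
    calc ∫ ω in A, X₂ ω ∂P
        = ∫ ω in A, (P[X₂ | hτ.measurableSpace]) ω ∂P := (setIntegral_condExp hm hint₂ hA).symm
      _ ≤ ∫ ω in A, (P[X₁ | hτ.measurableSpace]) ω ∂P :=
          setIntegral_mono_ae integrable_condExp.integrableOn
            integrable_condExp.integrableOn hcond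
      _ = ∫ ω in A, X₁ ω ∂P := setIntegral_condExp hm hint₁ hA
  -- strict pointwise inequality on A, a.e.
  have hpos : ∀ᵐ ω ∂P, ω ∈ A → 0 < X₂ ω - X₁ ω := by
    filter_upwards [hlt, section_integrableOn P F T f₁ hmono₁ hprog₁ hI₁ ℓ₁,
      section_integrableOn P F T f₂ hmono₂ hprog₂ hI₂ ℓ₂] with ω hτσ hi₁ hi₂ hωA
    have hsub : Set.uIcc (τ ω) (σ ω) ⊆ Set.Icc 0 T := by
      rw [Set.uIcc_of_le (hle ω)]
      exact Set.Icc_subset_Icc (hτT ω).1 (hσT ω).2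
    have hii₁ : IntervalIntegrable (fun s => f₁ s ω (ℓ₁ ω)) volume (τ ω) (σ ω) :=
      (hi₁.mono_set hsub).intervalIntegrable
    have hii₂ : IntervalIntegrable (fun s => f₂ s ω (ℓ₂ ω)) volume (τ ω) (σ ω) :=
      (hi₂.mono_set hsub).intervalIntegrable
    have hdiff : X₂ ω - X₁ ω
        = ∫ s in (τ ω)..(σ ω), (f₂ s ω (ℓ₂ ω) - f₁ s ω (ℓ₁ ω)) :=
      (intervalIntegral.integral_sub hii₂ hii₁).symm
    rw [hdiff]
    refine intervalIntegral.intervalIntegral_pos_of_pos_on (hii₂.sub hii₁) ?_ hτσ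
    intro s _
    have h1 : f₁ s ω (ℓ₁ ω) < f₁ s ω (ℓ₂ ω) := hmono₁ s ω hωA
    have h2 : f₁ s ω (ℓ₂ ω) ≤ f₂ s ω (ℓ₂ ω) := hf₁₂ s ω (ℓ₂ ω)
    linarith
  -- conclude P A = 0
  have hPA : P A = 0 := by
    by_contra hne
    set g : Ω → ℝ := fun ω => X₂ ω - X₁ ω with hg
    have hgint : IntegrableOn g A P := (hint₂.sub hint₁).integrableOn
    have hpos' : ∀ᵐ ω ∂P.restrict A, 0 < g ω := by
      filter_upwards [ae_restrict_mem hA0, ae_restrict_of_ae hpos] with ω h1 h2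
      exact h2 h1
    have hnonneg : 0 ≤ᵐ[P.restrict A] g := hpos'.mono fun ω h => h.le
    have hle0 : ∫ ω in A, g ω ∂P ≤ 0 := by
      simp only [hg]
      rw [integral_sub hint₂.integrableOn hint₁.integrableOn]
      linarith
    have heq0 : ∫ ω in A, g ω ∂P = 0 :=
      le_antisymm hle0 (integral_nonneg_of_ae hnonneg)
    have hzero : g =ᵐ[P.restrict A] 0 :=
      (integral_eq_zero_iff_of_nonneg_ae hnonneg hgint).mp heq0
    have hfalse : ∀ᵐ ω ∂P.restrict A, False := by
      filter_upwards [hpos', hzero] with ω h1 h2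
      rw [h2] at h1; exact lt_irrefl 0 h1
    have : P.restrict A Set.univ = 0 := by
      simpa using ae_iff.mp hfalse
    rw [Measure.restrict_apply_univ] at this
    exact hne this
  rw [ae_iff]
  convert hPA using 2
  ext ω
  simp [hAdef, not_le]


end
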